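/- Let H be a complex Hilbert space and let M, S, T : H → H be bounded linear operators such that M is elliptic with constant c_M > 0 and S is elliptic with constant c_S > 0, and fix c_d > 0. Then there exist constants α > 0, β > 0 and C > 0, depending only on c_M, c_S, c_d and the operator norms of M, S, T (and not on any subspace), such that the following holds: for all finite-dimensional subspaces U, V ⊆ H with dim U = dim V satisfying the inf-sup condition that for every u ∈ U the sup over nonzero v ∈ V of |⟪v, u⟫|/‖v‖ is ≥ c_d‖u‖, with P : U → V the unique linear map with ⟪v, S(P u)⟫ = ⟪v, u⟫ for all u ∈ U, v ∈ V, one has for all ξ ∈ V and φ, ψ ∈ U: |⟪φ, M φ⟫ + α⟪ξ, S ξ⟫ + β⟪P ψ, ψ⟫ − α⟪ξ, φ⟫ − β⟪P ψ, T ξ⟫| ≥ C(‖ξ‖² + ‖φ‖² + ‖ψ‖²). -/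

import Mathlib

open scoped ComplexInnerProductSpace

lemma key_arith (cM cS cd t sN a b p s : ℝ)
    (hcM : 0 < cM) (hcS : 0 < cS) (hcd : 0 < cd) (ht : 0 ≤ t) (hsN : 0 < sN)
    (ha : 0 ≤ a) (hb : 0 ≤ b) (hp : 0 ≤ p) (hs : 0 ≤ s)
    (hps : cd * s ≤ sN * p) :
    min (cM/2) (min (cM*cS^2/4) (cM*cS^3/(2*(t^2+1)) * cS/2 * (cd/sN)^2)) * (a^2+b^2+s^2)
      ≤ cM*b^2 + (cM*cS)*(cS*a^2) + (cM*cS^3/(2*(t^2+1)))*(cS*p^2)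
        - (cM*cS)*(a*b) - (cM*cS^3/(2*(t^2+1)))*(t*(p*a)) := by
  set β := cM*cS^3/(2*(t^2+1)) with hβ
  have hβpos : 0 < β := by rw [hβ]; positivity
  have h1 : (cM*cS)*(a*b) ≤ cM*cS^2/2*a^2 + cM/2*b^2 := by
    nlinarith [mul_nonneg hcM.le (sq_nonneg (cS*a - b))]
  have h2 : β*(t*(p*a)) ≤ β*cS/2*p^2 + β*t^2/(2*cS)*a^2 := by
    rw [← mul_le_mul_iff_right₀ (show (0:ℝ) < 2*cS by positivity)]
    have e : 2*cS*(β*cS/2*p^2 + β*t^2/(2*cS)*a^2) = β*cS^2*p^2 + β*(t*a)^2 := by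
      field_simp
    rw [e]
    nlinarith [mul_nonneg hβpos.le (sq_nonneg (cS*p - t*a))]
  have h3 : β*t^2/(2*cS) ≤ cM*cS^2/4 := by
    rw [div_le_div_iff₀ (by positivity) (by norm_num), hβ, div_mul_eq_mul_div,
      div_mul_eq_mul_div, div_le_iff₀ (by positivity)]
    nlinarith [mul_pos (mul_pos hcM (pow_pos hcS 3)) (show (0:ℝ) < 1 by norm_num),
      mul_nonneg (mul_pos hcM (pow_pos hcS 3)).le (sq_nonneg t)]
  have h4 : (cd/sN)^2 * s^2 ≤ p^2 := by
    rw [div_pow, div_mul_eq_mul_div, div_le_iff₀ (by positivity)]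
    nlinarith [mul_le_mul hps hps (by positivity) (by positivity)]
  have hC1 : min (cM/2) (min (cM*cS^2/4) (β * cS/2 * (cd/sN)^2)) ≤ cM/2 := min_le_left _ _
  have hC2 : min (cM/2) (min (cM*cS^2/4) (β * cS/2 * (cd/sN)^2)) ≤ cM*cS^2/4 :=
    le_trans (min_le_right _ _) (min_le_left _ _)
  have hC3 : min (cM/2) (min (cM*cS^2/4) (β * cS/2 * (cd/sN)^2)) ≤ β * cS/2 * (cd/sN)^2 :=
    le_trans (min_le_right _ _) (min_le_right _ _)
  nlinarith [mul_le_mul_of_nonneg_right hC1 (sq_nonneg b),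
    mul_le_mul_of_nonneg_right hC2 (sq_nonneg a),
    mul_le_mul_of_nonneg_right hC3 (sq_nonneg s),
    mul_le_mul_of_nonneg_left h4 (by positivity : (0:ℝ) ≤ β*cS/2),
    mul_le_mul_of_nonneg_right h3 (sq_nonneg a)]

/-- Abstract form of Lemma 5.2 of the paper: for elliptic bounded operators `M, S` and a bounded
operator `T` on a complex Hilbert space, there exist `α, β, C > 0` depending only on the
ellipticity constants, the inf-sup constant `c_d` and the operator norms, such that for all
finite-dimensional subspaces `U, V` of equal dimension satisfying the inf-sup condition with
constant `c_d`, and `P : U → V` the map with `⟪v, S(Pu)⟫ = ⟪v, u⟫`, the discrete principal form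
is uniformly `Θ_h`-coercive. -/
theorem uniform_discrete_theta_coercivity_of_mixed_principal_part
    {H : Type*} [NormedAddCommGroup H] [InnerProductSpace ℂ H] [CompleteSpace H]
    (M S T : H →L[ℂ] H) (cM cS cd : ℝ) (hcM : 0 < cM) (hcS : 0 < cS) (hcd : 0 < cd)
    (hM : ∀ u : H, cM * ‖u‖ ^ 2 ≤ (⟪u, M u⟫).re)
    (hS : ∀ u : H, cS * ‖u‖ ^ 2 ≤ (⟪u, S u⟫).re) :
    ∃ α β C : ℝ, 0 < α ∧ 0 < β ∧ 0 < C ∧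
      ∀ U V : Submodule ℂ H, FiniteDimensional ℂ U → FiniteDimensional ℂ V →
        Module.finrank ℂ U = Module.finrank ℂ V →
        (∀ u ∈ U,
          cd * ‖u‖ ≤ ⨆ v : {v : H // v ∈ V ∧ v ≠ 0}, ‖⟪(v : H), u⟫‖ / ‖(v : H)‖) →
        ∀ P : U →ₗ[ℂ] V,
          (∀ (u : U) (v : V), ⟪(v : H), S (P u : H)⟫ = ⟪(v : H), (u : H)⟫) →
          ∀ (ξ : V) (φ ψ : U),
            C * (‖(ξ : H)‖ ^ 2 + ‖(φ : H)‖ ^ 2 + ‖(ψ : H)‖ ^ 2) ≤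
              ‖⟪(φ : H), M (φ : H)⟫ + (α : ℂ) * ⟪(ξ : H), S (ξ : H)⟫
                  + (β : ℂ) * ⟪(P ψ : H), (ψ : H)⟫
                - (α : ℂ) * ⟪(ξ : H), (φ : H)⟫ - (β : ℂ) * ⟪(P ψ : H), T (ξ : H)⟫‖ := by
  set t := ‖T‖ with hT
  have ht : 0 ≤ t := norm_nonneg T
  set sN := ‖S‖ + 1 with hsNdef
  have hsN : 0 < sN := by positivity
  refine ⟨cM*cS, cM*cS^3/(2*(t^2+1)),
    min (cM/2) (min (cM*cS^2/4) (cM*cS^3/(2*(t^2+1)) * cS/2 * (cd/sN)^2)),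
    by positivity, by positivity, by positivity, ?_⟩
  intro U V _ _ _ hinf P hP ξ φ ψ
  set β := cM*cS^3/(2*(t^2+1)) with hβ
  set E : ℂ := ⟪(φ : H), M (φ : H)⟫ + ((cM*cS : ℝ) : ℂ) * ⟪(ξ : H), S (ξ : H)⟫
      + (β : ℂ) * ⟪(P ψ : H), (ψ : H)⟫
    - ((cM*cS : ℝ) : ℂ) * ⟪(ξ : H), (φ : H)⟫ - (β : ℂ) * ⟪(P ψ : H), T (ξ : H)⟫ with hE
  have reabs : ∀ z : ℂ, z.re ≤ ‖z‖ := fun z => Complex.re_le_norm z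
  have hre : E.re ≤ ‖E‖ := reabs E
  have hEre : E.re = (⟪(φ : H), M (φ : H)⟫).re + (cM*cS) * (⟪(ξ : H), S (ξ : H)⟫).re
      + β * (⟪(P ψ : H), (ψ : H)⟫).re
      - (cM*cS) * (⟪(ξ : H), (φ : H)⟫).re - β * (⟪(P ψ : H), T (ξ : H)⟫).re := by
    simp [hE]
  -- ellipticity bounds
  have hb1 : cM * ‖(φ : H)‖ ^ 2 ≤ (⟪(φ : H), M (φ : H)⟫).re := hM _
  have hb2 : cS * ‖(ξ : H)‖ ^ 2 ≤ (⟪(ξ : H), S (ξ : H)⟫).re := hS _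
  have hb3 : cS * ‖(P ψ : H)‖ ^ 2 ≤ (⟪(P ψ : H), (ψ : H)⟫).re := by
    rw [← hP ψ (P ψ)]; exact hS _
  -- Cauchy-Schwarz bounds
  have hb4 : (⟪(ξ : H), (φ : H)⟫).re ≤ ‖(ξ : H)‖ * ‖(φ : H)‖ :=
    le_trans (reabs _) (norm_inner_le_norm _ _)
  have hb5 : (⟪(P ψ : H), T (ξ : H)⟫).re ≤ ‖(P ψ : H)‖ * (t * ‖(ξ : H)‖) :=
    le_trans (reabs _) (le_trans (norm_inner_le_norm _ _)
      (mul_le_mul_of_nonneg_left (T.le_opNorm _) (norm_nonneg _)))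
  -- inf-sup bound: cd * ‖ψ‖ ≤ sN * ‖P ψ‖
  have hps : cd * ‖(ψ : H)‖ ≤ sN * ‖(P ψ : H)‖ := by
    refine le_trans (hinf (ψ : H) ψ.2) (Real.iSup_le (fun v => ?_) (by positivity))
    have hv : (0:ℝ) < ‖(v : H)‖ := norm_pos_iff.mpr v.2.2
    rw [div_le_iff₀ hv]
    have hinner : ⟪(v : H), (ψ : H)⟫ = ⟪(v : H), S (P ψ : H)⟫ :=
      (hP ψ ⟨(v : H), v.2.1⟩).symm
    calc ‖⟪(v : H), (ψ : H)⟫‖ = ‖⟪(v : H), S (P ψ : H)⟫‖ := by rw [hinner]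
      _ ≤ ‖(v : H)‖ * ‖S (P ψ : H)‖ := norm_inner_le_norm _ _
      _ ≤ ‖(v : H)‖ * (‖S‖ * ‖(P ψ : H)‖) :=
          mul_le_mul_of_nonneg_left (S.le_opNorm _) (norm_nonneg _)
      _ ≤ sN * ‖(P ψ : H)‖ * ‖(v : H)‖ := by
          rw [hsNdef]; nlinarith [norm_nonneg (v : H), norm_nonneg (P ψ : H),
            norm_nonneg S, mul_nonneg (norm_nonneg (P ψ : H)) (norm_nonneg (v : H))]
  have key := key_arith cM cS cd t sN ‖(ξ : H)‖ ‖(φ : H)‖ ‖(P ψ : H)‖ ‖(ψ : H)‖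
    hcM hcS hcd ht hsN (norm_nonneg _) (norm_nonneg _) (norm_nonneg _) (norm_nonneg _) hps
  have hαβ : (0:ℝ) < cM*cS := by positivity
  have hβpos : (0:ℝ) < β := by rw [hβ]; positivity
  refine le_trans ?_ hre
  rw [hEre]
  nlinarith [mul_le_mul_of_nonneg_left hb2 hαβ.le,
    mul_le_mul_of_nonneg_left hb3 hβpos.le,
    mul_le_mul_of_nonneg_left hb4 hαβ.le,
    mul_le_mul_of_nonneg_left hb5 hβpos.le]
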